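/- For n ≥ 5, under the hypotheses A₁ ≤ b_k ≤ A₂ (0 ≤ k ≤ n−1, A₁ > 0), the positive part satisfies 0 < Q_n⁺ ≤ 0.24·α·A₂/n² with α = 2A₂ + 0.06·A₂², and the negative part satisfies 0 < Q_n⁻ ≤ 0.12·A₂²/n². -/

import Mathlib

private lemma d_succ' (d : ℕ → ℝ)
    (hd : ∀ m : ℕ, 1 ≤ m → d m = (7 * (m : ℝ) - 6) * (7 * (m : ℝ) - 4) / 4 * d (m - 1))
    (m : ℕ) : d (m+1) = (7*(m:ℝ)+1)*(7*(m:ℝ)+3)/4 * d m := by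
  have h := hd (m+1) (by omega)
  simp only [Nat.add_sub_cancel] at h
  rw [h]; push_cast; ring

private lemma d_pos' (d : ℕ → ℝ) (hd0 : d 0 = 1)
    (hd : ∀ m : ℕ, 1 ≤ m → d m = (7 * (m : ℝ) - 6) * (7 * (m : ℝ) - 4) / 4 * d (m - 1)) :
    ∀ m, 0 < d m := by
  intro m
  induction m with
  | zero => rw [hd0]; norm_num
  | succ k ih =>
    rw [d_succ' d hd k]
    have hk : (0:ℝ) ≤ (k:ℝ) := Nat.cast_nonneg k
    apply mul_pos _ ih
    positivity

private lemma pair_chain (d : ℕ → ℝ) (hd0 : d 0 = 1)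
    (hd : ∀ m : ℕ, 1 ≤ m → d m = (7 * (m : ℝ) - 6) * (7 * (m : ℝ) - 4) / 4 * d (m - 1))
    (k j : ℕ) : ∀ i, j ≤ i → 2*i ≤ k → d i * d (k-i) ≤ d j * d (k-j) := by
  have dpos := d_pos' d hd0 hd
  intro i hji
  induction i, hji using Nat.le_induction with
  | base => intro _; exact le_refl _
  | succ i hji ih =>
    intro h2
    refine le_trans ?_ (ih (by omega))
    have hm : k - i = (k - (i+1)) + 1 := by omega
    have him : (i:ℝ) ≤ ((k - (i+1) : ℕ):ℝ) := by exact_mod_cast (show i ≤ k - (i+1) by omega)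
    rw [hm, d_succ' d hd i, d_succ' d hd (k - (i+1))]
    have h1 := dpos i
    have h2' := dpos (k - (i+1))
    have hi0 : (0:ℝ) ≤ (i:ℝ) := Nat.cast_nonneg i
    have hm0 : (0:ℝ) ≤ ((k - (i+1):ℕ):ℝ) := Nat.cast_nonneg _
    have hD : (0:ℝ) < d i * d (k - (i+1)) := mul_pos h1 h2'
    nlinarith [mul_nonneg (sub_nonneg.2 him) hD.le,
      mul_nonneg (mul_nonneg (sub_nonneg.2 him) hm0) hD.le,
      mul_nonneg (mul_nonneg (sub_nonneg.2 him) hi0) hD.le]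

private lemma pair_le' (d : ℕ → ℝ) (hd0 : d 0 = 1)
    (hd : ∀ m : ℕ, 1 ≤ m → d m = (7 * (m : ℝ) - 6) * (7 * (m : ℝ) - 4) / 4 * d (m - 1))
    (k j i : ℕ) (hj : 1 ≤ j) (hji : j ≤ i) (hik : i + j ≤ k) :
    d i * d (k-i) ≤ d j * d (k-j) := by
  rcases le_or_gt (2*i) k with h | h
  · exact pair_chain d hd0 hd k j i hji h
  · have h1 : j ≤ k - i := by omega
    have h2 : 2*(k-i) ≤ k := by omega
    have h3 := pair_chain d hd0 hd k j (k-i) h1 h2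
    rw [show k - (k-i) = i from by omega] at h3
    linarith [h3, mul_comm (d i) (d (k-i))]
private lemma sum_pair_le (d : ℕ → ℝ) (hd0 : d 0 = 1)
    (hd : ∀ m : ℕ, 1 ≤ m → d m = (7 * (m : ℝ) - 6) * (7 * (m : ℝ) - 4) / 4 * d (m - 1))
    (k : ℕ) (hk : 3 ≤ k) :
    ∑ i ∈ Finset.Icc 1 (k-1), d i * d (k-i)
      ≤ 2*(d 1 * d (k-1)) + ((k:ℝ)-3) * (d 2 * d (k-2)) := by
  have hset : Finset.Icc 1 (k-1) = insert 1 (insert (k-1) (Finset.Icc 2 (k-2))) := by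
    ext x
    simp only [Finset.mem_Icc, Finset.mem_insert]
    omega
  rw [hset, Finset.sum_insert (by simp only [Finset.mem_insert, Finset.mem_Icc]; omega),
    Finset.sum_insert (by simp only [Finset.mem_Icc]; omega)]
  have h1 : d (k-1) * d (k-(k-1)) = d 1 * d (k-1) := by
    rw [show k - (k-1) = 1 from by omega]; ring
  have hmid : ∑ i ∈ Finset.Icc 2 (k-2), d i * d (k-i)
      ≤ ((k:ℝ)-3) * (d 2 * d (k-2)) := by
    have hcard : (Finset.Icc 2 (k-2)).card = k - 3 := by
      rw [Nat.card_Icc]; omega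
    calc ∑ i ∈ Finset.Icc 2 (k-2), d i * d (k-i)
        ≤ ∑ _i ∈ Finset.Icc 2 (k-2), d 2 * d (k-2) := by
          apply Finset.sum_le_sum
          intro i hi
          rw [Finset.mem_Icc] at hi
          exact pair_le' d hd0 hd k 2 i (by omega) hi.1 (by omega)
      _ = ((k:ℝ)-3) * (d 2 * d (k-2)) := by
          rw [Finset.sum_const, hcard, nsmul_eq_mul]
          congr 1
          have : ((k - 3 : ℕ) : ℝ) = (k:ℝ) - 3 := by
            rw [Nat.cast_sub (by omega)]; norm_num
          rw [this]
  rw [h1]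
  linarith
private lemma key006 (d : ℕ → ℝ) (hd0 : d 0 = 1)
    (hd : ∀ m : ℕ, 1 ≤ m → d m = (7 * (m : ℝ) - 6) * (7 * (m : ℝ) - 4) / 4 * d (m - 1))
    (k : ℕ) (hk : 4 ≤ k) :
    2*(d 1 * d (k-1)) + ((k:ℝ)-3) * (d 2 * d (k-2)) ≤ 0.06 * d k := by
  have dpos := d_pos' d hd0 hd
  have hd1 : d 1 = 3/4 := by
    have := d_succ' d hd 0; rw [hd0] at this; norm_num at this; linarith
  have hd2 : d 2 = 15 := by
    have := d_succ' d hd 1; rw [hd1] at this; norm_num at this; linarith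
  have e1 : d (k-1) = (7*(k:ℝ)-13)*(7*(k:ℝ)-11)/4 * d (k-2) := by
    have h := hd (k-1) (by omega)
    rw [show k-1-1 = k-2 from by omega, Nat.cast_sub (show 1 ≤ k by omega)] at h
    rw [h]; push_cast; ring
  have e2 : d k = (7*(k:ℝ)-6)*(7*(k:ℝ)-4)/4 * d (k-1) := hd k (by omega)
  have hx : (4:ℝ) ≤ (k:ℝ) := by exact_mod_cast hk
  have hD := dpos (k-2)
  set x := (k:ℝ) with hxdef
  have key : (3/2)*((7*x-13)*(7*x-11)/4) + (x-3)*15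
      ≤ 0.06 * ((7*x-6)*(7*x-4)/4) * ((7*x-13)*(7*x-11)/4) := by
    nlinarith [sq_nonneg (x-4), sq_nonneg x, mul_nonneg (sub_nonneg.2 hx) (sub_nonneg.2 hx),
      mul_nonneg (mul_nonneg (sub_nonneg.2 hx) (sub_nonneg.2 hx)) (sub_nonneg.2 hx),
      sq_nonneg (x*x - 4*x)]
  rw [e2, e1, hd1, hd2]
  nlinarith [mul_le_mul_of_nonneg_right key hD.le]

private lemma key024 (d : ℕ → ℝ) (hd0 : d 0 = 1)
    (hd : ∀ m : ℕ, 1 ≤ m → d m = (7 * (m : ℝ) - 6) * (7 * (m : ℝ) - 4) / 4 * d (m - 1))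
    (n : ℕ) (hn : 5 ≤ n) :
    2*(d 1 * d (n-1)) + ((n:ℝ)-3) * (d 2 * d (n-2)) ≤ 0.24 / (n:ℝ)^2 * d n := by
  have dpos := d_pos' d hd0 hd
  have hd1 : d 1 = 3/4 := by
    have := d_succ' d hd 0; rw [hd0] at this; norm_num at this; linarith
  have hd2 : d 2 = 15 := by
    have := d_succ' d hd 1; rw [hd1] at this; norm_num at this; linarith
  have e1 : d (n-1) = (7*(n:ℝ)-13)*(7*(n:ℝ)-11)/4 * d (n-2) := by
    have h := hd (n-1) (by omega)
    rw [show n-1-1 = n-2 from by omega, Nat.cast_sub (show 1 ≤ n by omega)] at h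
    rw [h]; push_cast; ring
  have e2 : d n = (7*(n:ℝ)-6)*(7*(n:ℝ)-4)/4 * d (n-1) := hd n (by omega)
  have hx : (5:ℝ) ≤ (n:ℝ) := by exact_mod_cast hn
  have hD := dpos (n-2)
  set x := (n:ℝ) with hxdef
  have hx0 : (0:ℝ) < x := by linarith
  have key : ((3/2)*((7*x-13)*(7*x-11)/4) + (x-3)*15) * x^2
      ≤ 0.24 * (((7*x-6)*(7*x-4)/4) * ((7*x-13)*(7*x-11)/4)) := by
    nlinarith [sq_nonneg (x-5), mul_nonneg (sub_nonneg.2 hx) (sub_nonneg.2 hx),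
      mul_nonneg (mul_nonneg (sub_nonneg.2 hx) (sub_nonneg.2 hx)) (sub_nonneg.2 hx),
      mul_nonneg (mul_nonneg (sub_nonneg.2 hx) (sub_nonneg.2 hx)) hx0.le,
      sq_nonneg (x*x - 5*x)]
  have key2 : (3/2)*((7*x-13)*(7*x-11)/4) + (x-3)*15
      ≤ 0.24 / x^2 * (((7*x-6)*(7*x-4)/4) * ((7*x-13)*(7*x-11)/4)) := by
    have h2 : (0:ℝ) < x^2 := by positivity
    rw [show (0.24:ℝ) / x^2 * (((7*x-6)*(7*x-4)/4) * ((7*x-13)*(7*x-11)/4))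
        = 0.24 * (((7*x-6)*(7*x-4)/4) * ((7*x-13)*(7*x-11)/4)) / x^2 from by ring,
      le_div_iff₀ h2]
    linarith [key]
  rw [e2, e1, hd1, hd2]
  nlinarith [mul_le_mul_of_nonneg_right key2 hD.le]
private lemma sum06 (d : ℕ → ℝ) (hd0 : d 0 = 1)
    (hd : ∀ m : ℕ, 1 ≤ m → d m = (7 * (m : ℝ) - 6) * (7 * (m : ℝ) - 4) / 4 * d (m - 1))
    (k : ℕ) (hk : 1 ≤ k) :
    ∑ i ∈ Finset.Icc 1 (k-1), d i * d (k-i) ≤ 0.06 * d k := by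
  have hd1 : d 1 = 3/4 := by
    have := d_succ' d hd 0; rw [hd0] at this; norm_num at this; linarith
  have hd2 : d 2 = 15 := by
    have := d_succ' d hd 1; rw [hd1] at this; norm_num at this; linarith
  have hd3 : d 3 = 3825/4 := by
    have := d_succ' d hd 2; rw [hd2] at this; norm_num at this; linarith
  match k, hk with
  | 1, _ => simp [hd1]; norm_num
  | 2, _ =>
    rw [show (2:ℕ)-1 = 1 from rfl, Finset.Icc_self, Finset.sum_singleton]
    norm_num [hd1, hd2]
  | 3, _ =>
    rw [show Finset.Icc 1 (3-1) = {1, 2} from rfl, Finset.sum_insert (by decide),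
      Finset.sum_singleton]
    norm_num [hd1, hd2, hd3]
  | (m+4), _ =>
    calc ∑ i ∈ Finset.Icc 1 (m+4-1), d i * d (m+4-i)
        ≤ 2*(d 1 * d (m+4-1)) + (((m+4:ℕ):ℝ)-3) * (d 2 * d (m+4-2)) :=
          sum_pair_le d hd0 hd (m+4) (by omega)
      _ ≤ 0.06 * d (m+4) := key006 d hd0 hd (m+4) (by omega)
theorem Qp_Qm_bounds (d b T' T Qp Qm : ℕ → ℝ) (n : ℕ) (A₁ A₂ : ℝ)
    (hd0 : d 0 = 1)
    (hd : ∀ m : ℕ, 1 ≤ m → d m = (7 * (m : ℝ) - 6) * (7 * (m : ℝ) - 4) / 4 * d (m - 1))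
    (hT' : ∀ k : ℕ, T' k = ∑ i ∈ Finset.Icc 1 (k - 1), b i * b (k - i) * d i * d (k - i))
    (hT : ∀ k : ℕ, T k = 2 * d k * b k + T' k)
    (hQp : ∀ m : ℕ, Qp m = (1 / (2 * d m)) * ∑ k ∈ Finset.Icc 1 (m - 1),
      (7 * (m : ℝ) - 7 * (k : ℝ) - 6) * (7 * (m : ℝ) - 7 * (k : ℝ) - 4) / 2
        * b (m - k - 1) * d (m - k - 1) * T k)
    (hQm : ∀ m : ℕ, Qm m = T' m / (2 * d m))
    (hn : 5 ≤ n) (hA₁ : 0 < A₁)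
    (hbk : ∀ k : ℕ, k ≤ n - 1 → A₁ ≤ b k ∧ b k ≤ A₂) :
    (0 < Qp n ∧ Qp n ≤ 0.24 * (2 * A₂ + 0.06 * A₂ ^ 2) * A₂ / (n : ℝ) ^ 2) ∧
    (0 < Qm n ∧ Qm n ≤ 0.12 * A₂ ^ 2 / (n : ℝ) ^ 2) := by
  have dpos := d_pos' d hd0 hd
  set α : ℝ := 2 * A₂ + 0.06 * A₂ ^ 2 with hα
  have hA₂ : 0 < A₂ :=
    lt_of_lt_of_le hA₁ (le_trans (hbk 0 (by omega)).1 (hbk 0 (by omega)).2)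
  have hαpos : 0 < α := by rw [hα]; nlinarith [sq_nonneg A₂]
  have hbpos : ∀ k, k ≤ n - 1 → 0 < b k := fun k hk => lt_of_lt_of_le hA₁ (hbk k hk).1
  have hn0 : (0:ℝ) < (n:ℝ) := by exact_mod_cast (by omega : 0 < n)
  have hT'le : ∀ k, k ≤ n → T' k ≤ A₂^2 * ∑ i ∈ Finset.Icc 1 (k-1), d i * d (k-i) := by
    intro k hk
    rw [hT' k, Finset.mul_sum]
    apply Finset.sum_le_sum
    intro i hi
    rw [Finset.mem_Icc] at hi
    have hb1 := hbk i (by omega)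
    have hb2 := hbk (k-i) (by omega)
    have h1 := dpos i; have h2 := dpos (k-i)
    have hbb : b i * b (k-i) ≤ A₂ * A₂ :=
      mul_le_mul hb1.2 hb2.2 (le_of_lt (lt_of_lt_of_le hA₁ hb2.1)) hA₂.le
    nlinarith [mul_le_mul_of_nonneg_right hbb (mul_pos h1 h2).le]
  have hT'nonneg : ∀ k, k ≤ n → 0 ≤ T' k := by
    intro k hk; rw [hT' k]
    apply Finset.sum_nonneg
    intro i hi; rw [Finset.mem_Icc] at hi
    have h1 := hbpos i (by omega)
    have h2 := hbpos (k-i) (by omega)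
    exact (mul_pos (mul_pos (mul_pos h1 h2) (dpos i)) (dpos (k-i))).le
  have hTle : ∀ k, 1 ≤ k → k ≤ n - 1 → T k ≤ α * d k := by
    intro k h1 h2
    rw [hT k, hα]
    have hs := sum06 d hd0 hd k h1
    have h3 := hT'le k (by omega)
    have hb := (hbk k h2).2
    nlinarith [mul_le_mul_of_nonneg_left hs (sq_nonneg A₂),
      mul_le_mul_of_nonneg_left hb (by linarith [dpos k] : (0:ℝ) ≤ 2 * d k)]
  have hTpos : ∀ k, 1 ≤ k → k ≤ n - 1 → 0 < T k := by
    intro k h1 h2; rw [hT k]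
    have hb := hbpos k h2
    nlinarith [hT'nonneg k (by omega), mul_pos (dpos k) hb]
  have hSn : ∑ i ∈ Finset.Icc 1 (n-1), d i * d (n-i) ≤ 0.24/(n:ℝ)^2 * d n :=
    le_trans (sum_pair_le d hd0 hd n (by omega)) (key024 d hd0 hd n hn)
  constructor
  · -- Qp
    rw [hQp n]
    have hterm_eq : ∀ k ∈ Finset.Icc 1 (n-1),
        (7*(n:ℝ) - 7*(k:ℝ) - 6) * (7*(n:ℝ) - 7*(k:ℝ) - 4) / 2 * b (n-k-1) * d (n-k-1) * T k
        = 2 * (b (n-k-1) * (d (n-k) * T k)) := by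
      intro k hk; rw [Finset.mem_Icc] at hk
      have e : d (n-k) = (7*(n:ℝ)-7*(k:ℝ)-6)*(7*(n:ℝ)-7*(k:ℝ)-4)/4 * d (n-k-1) := by
        have h := hd (n-k) (by omega)
        rw [Nat.cast_sub (by omega : k ≤ n)] at h
        rw [h]; ring
      rw [e]; ring
    rw [Finset.sum_congr rfl hterm_eq]
    have hfac : (0:ℝ) < 1 / (2 * d n) := by
      have := dpos n; positivity
    have hpos : 0 < ∑ k ∈ Finset.Icc 1 (n-1), 2 * (b (n-k-1) * (d (n-k) * T k)) := by
      apply Finset.sum_pos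
      · intro k hk; rw [Finset.mem_Icc] at hk
        have hb := hbpos (n-k-1) (by omega)
        have hT := hTpos k hk.1 hk.2
        exact mul_pos two_pos (mul_pos hb (mul_pos (dpos _) hT))
      · exact ⟨1, Finset.mem_Icc.mpr ⟨le_refl 1, by omega⟩⟩
    refine ⟨mul_pos hfac hpos, ?_⟩
    have hsum_le : ∑ k ∈ Finset.Icc 1 (n-1), 2 * (b (n-k-1) * (d (n-k) * T k))
        ≤ ∑ k ∈ Finset.Icc 1 (n-1), 2*A₂*α * (d k * d (n-k)) := by
      apply Finset.sum_le_sum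
      intro k hk; rw [Finset.mem_Icc] at hk
      have hb := hbk (n-k-1) (by omega)
      have hTl := hTle k hk.1 hk.2
      have hTp := hTpos k hk.1 hk.2
      have hD := dpos (n-k)
      have h1 : d (n-k) * T k ≤ d (n-k) * (α * d k) := mul_le_mul_of_nonneg_left hTl hD.le
      have h2 : b (n-k-1) * (d (n-k) * T k) ≤ A₂ * (d (n-k) * (α * d k)) :=
        mul_le_mul hb.2 h1 (mul_pos hD hTp).le hA₂.le
      nlinarith [h2]
    have hsum2 : ∑ k ∈ Finset.Icc 1 (n-1), 2*A₂*α * (d k * d (n-k))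
        = 2*A₂*α * ∑ i ∈ Finset.Icc 1 (n-1), d i * d (n-i) := by
      rw [Finset.mul_sum]
    calc (1 / (2 * d n)) * ∑ k ∈ Finset.Icc 1 (n-1), 2 * (b (n-k-1) * (d (n-k) * T k))
        ≤ (1 / (2 * d n)) * (2*A₂*α * (0.24/(n:ℝ)^2 * d n)) := by
          apply mul_le_mul_of_nonneg_left _ hfac.le
          calc ∑ k ∈ Finset.Icc 1 (n-1), 2 * (b (n-k-1) * (d (n-k) * T k))
              ≤ ∑ k ∈ Finset.Icc 1 (n-1), 2*A₂*α * (d k * d (n-k)) := hsum_le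
            _ = 2*A₂*α * ∑ i ∈ Finset.Icc 1 (n-1), d i * d (n-i) := hsum2
            _ ≤ 2*A₂*α * (0.24/(n:ℝ)^2 * d n) := by
                apply mul_le_mul_of_nonneg_left hSn
                positivity
      _ = 0.24 * α * A₂ / (n:ℝ)^2 := by
          have h1 : d n ≠ 0 := (dpos n).ne'
          have h2 : (n:ℝ) ≠ 0 := hn0.ne'
          field_simp
  · -- Qm
    rw [hQm n]
    have hdn2 : (0:ℝ) < 2 * d n := by linarith [dpos n]
    constructor
    · apply div_pos _ hdn2
      rw [hT' n]
      apply Finset.sum_pos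
      · intro i hi; rw [Finset.mem_Icc] at hi
        exact mul_pos (mul_pos (mul_pos (hbpos i (by omega)) (hbpos (n-i) (by omega)))
          (dpos i)) (dpos (n-i))
      · exact ⟨1, Finset.mem_Icc.mpr ⟨le_refl 1, by omega⟩⟩
    · rw [div_le_iff₀ hdn2]
      have h1 := hT'le n (le_refl n)
      have h2 : A₂^2 * (∑ i ∈ Finset.Icc 1 (n-1), d i * d (n-i))
          ≤ A₂^2 * (0.24/(n:ℝ)^2 * d n) := mul_le_mul_of_nonneg_left hSn (sq_nonneg A₂)
      have h3 : 0.12*A₂^2/(n:ℝ)^2 * (2*d n) = A₂^2 * (0.24/(n:ℝ)^2 * d n) := by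
        field_simp; ring
      rw [h3]
      linarith [h1, h2]
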